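/- Let B be a finite alphabet not containing ⋆, let d' ≥ 1, and let 𝒜 be a deterministic Büchi automaton over B ∪ {⋆} such that every infinite word accepted by 𝒜 contains at least one occurrence of ⋆. Then every word accepted by 𝒜 belongs to B^{d'ℕ}⋆B^ω (i.e., is a finite word over B of length a multiple of d', followed by a single ⋆, followed by an infinite word over B) if and only if δ(q,⋆) ∈ Q_∅ for every state q ∈ Q_fra ∪ Q_1 ∪ Q_2 ∪ … ∪ Q_{d'−1}. -/

import Mathlib

/-- A deterministic Büchi automaton over alphabet `A` with states `Q`. -/
structure DBA (A : Type) (Q : Type) where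
  delta : Q → A → Q
  init : Q
  F : Set Q

namespace DBA

variable {A Q : Type}

/-- The transition function extended to finite words. -/
def deltaStar (M : DBA A Q) : Q → List A → Q
  | q, [] => q
  | q, a :: u => deltaStar M (M.delta q a) u

/-- The run of `M` on the infinite word `w`. -/
def run (M : DBA A Q) (w : ℕ → A) : ℕ → Q
  | 0 => M.init
  | n + 1 => M.delta (run M w n) (w n)

/-- `M` accepts `w` if some accepting state occurs infinitely often in the run. -/
def Accepts (M : DBA A Q) (w : ℕ → A) : Prop :=
  ∃ q ∈ M.F, ∀ N : ℕ, ∃ n, N ≤ n ∧ run M w n = q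

/-- The ω-language of `M`. -/
def Lang (M : DBA A Q) : Set (ℕ → A) := {w | M.Accepts w}

/-- `M` with initial state changed to `q`. -/
def start (M : DBA A Q) (q : Q) : DBA A Q := { M with init := q }

/-- `q'` is accessible from `q` (by a nonempty word). -/
def Reach (M : DBA A Q) (q q' : Q) : Prop :=
  ∃ u : List A, u ≠ [] ∧ deltaStar M q u = q'

/-- `M` is weak: `F` is a union of strongly connected components. -/
def Weak (M : DBA A Q) : Prop :=
  ∀ q ∈ M.F, ∀ q', M.Reach q q' → M.Reach q' q → q' ∈ M.F

/-- `M` is minimal: distinct states recognize distinct languages. -/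
def Minimal (M : DBA A Q) : Prop :=
  ∀ q q' : Q, q ≠ q' → (M.start q).Lang ≠ (M.start q').Lang

end DBA

/-- Concatenation of a finite word and an infinite word. -/
def cat {A : Type} (u : List A) (w : ℕ → A) : ℕ → A :=
  fun n => if h : n < u.length then u.get ⟨n, h⟩ else w (n - u.length)

/-- The value `⟨v⟩ = Σ_{i<|v|} v[i]·b^(|v|-1-i)` of a finite digit word. -/
noncomputable def natVal (b : ℕ) (v : List (Fin b)) : ℝ :=
  ∑ i : Fin v.length, ((v.get i : ℕ) : ℝ) * (b : ℝ) ^ (v.length - 1 - (i : ℕ))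

/-- The fractional value `⟨w⟩_f = Σ_{i≥0} w[i]·b^(-i-1)` of an infinite digit word. -/
noncomputable def fracVal (b : ℕ) (w : ℕ → Fin b) : ℝ :=
  ∑' i : ℕ, ((w i : ℕ) : ℝ) * (b : ℝ) ^ (-(i : ℤ) - 1)

/-- The word `𝐮⋆𝐰` over `Σ^d ∪ {⋆}`; `none` is the separator `⋆`. -/
def encWord {b d : ℕ} (u : List (Fin d → Fin b)) (w : ℕ → Fin d → Fin b) :
    ℕ → Option (Fin d → Fin b) :=
  cat (u.map some ++ [none]) (fun n => some (w n))

/-- The vector of reals encoded by `𝐮⋆𝐰`. -/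
noncomputable def vecVal {b d : ℕ} (u : List (Fin d → Fin b)) (w : ℕ → Fin d → Fin b) :
    Fin d → ℝ :=
  fun i => natVal b (u.map fun t => t i) + fracVal b (fun n => w n i)

/-- A language of words over `Σ^d ∪ {⋆}` is saturated if membership only depends on
the encoded vector of reals. -/
def Saturated {b d : ℕ} (L : Set (ℕ → Option (Fin d → Fin b))) : Prop :=
  ∀ (u : List (Fin d → Fin b)) (w : ℕ → Fin d → Fin b)
    (u' : List (Fin d → Fin b)) (w' : ℕ → Fin d → Fin b),
    vecVal u w = vecVal u' w' → encWord u w ∈ L → encWord u' w' ∈ L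

/-- The parallelization `par(𝒜)` of an automaton over `Σ ∪ {⋆}`. -/
def parDBA {Q : Type} {b : ℕ} (d : ℕ) (M : DBA (Option (Fin b)) Q) :
    DBA (Option (Fin d → Fin b)) Q where
  delta := fun q x =>
    match x with
    | none => M.delta q none
    | some t => M.deltaStar q (List.ofFn fun i => some (t i))
  init := M.init
  F := M.F

/-- Fill the `f`-th component of a tuple of `Σ^□_f` with the digit `z`. -/
def fixTuple {b d : ℕ} (f : Fin d) (z : Fin b) (t : {i : Fin d // i ≠ f} → Fin b) :
    Fin d → Fin b :=
  fun i => if h : i = f then z else t ⟨i, h⟩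

/-- The automaton `𝒜^{z@f}` over `Σ^□_f ∪ {⋆}`; a letter of `Σ^□_f` is represented by
its tuple of non-`f` components (the `f`-th component being `□`). -/
def fixDBA {Q : Type} {b d : ℕ} (M : DBA (Option (Fin d → Fin b)) Q) (f : Fin d) (z : Fin b) :
    DBA (Option ({i : Fin d // i ≠ f} → Fin b)) Q where
  delta := fun q x =>
    match x with
    | none => M.delta q none
    | some t => M.delta q (some (fixTuple f z t))
  init := M.init
  F := M.F

/-- `fix_{□@f}(𝐰)`: replace the `f`-th component of every non-`⋆` letter by `□`. -/
def eraseComp {b d : ℕ} (f : Fin d) (w : ℕ → Option (Fin d → Fin b)) :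
    ℕ → Option ({i : Fin d // i ≠ f} → Fin b) :=
  fun n => (w n).map fun t i => t i.val

/-- `fix_{z@f}(𝐰)`: replace the `f`-th component (`□`) of every non-`⋆` letter by `z`. -/
def fillComp {b d : ℕ} (f : Fin d) (z : Fin b) (w : ℕ → Option ({i : Fin d // i ≠ f} → Fin b)) :
    ℕ → Option (Fin d → Fin b) :=
  fun n => (w n).map (fixTuple f z)

/-- The automaton `𝒜^{seq z}`, over alphabet `Σ ∪ {□,⋆}` (here `none` is `⋆` and
`some none` is `□`), with states `(Q × {0,…,d−1}) ∪ {⊥}` (`none` is `⊥`). -/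
def seqDBA {Q : Type} {b : ℕ} (d : ℕ) (hd : 0 < d) (M : DBA (Option (Fin b)) Q) (z : Fin b) :
    DBA (Option (Option (Fin b))) (Option (Q × Fin d)) where
  delta := fun s x =>
    match s, x with
    | none, _ => none
    | some (q, i), none => some (M.delta q none, i)
    | some (q, i), some (some a) =>
        if h : (i : ℕ) + 1 < d then some (M.delta q (some a), ⟨(i : ℕ) + 1, h⟩) else none
    | some (q, i), some none =>
        if (i : ℕ) = d - 1 then some (M.delta q (some z), ⟨0, hd⟩) else none
  init := some (M.init, ⟨0, hd⟩)
  F := {s | ∃ q ∈ M.F, ∃ i : Fin d, s = some (q, i)}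

/-- Auxiliary function for flattening an infinite word of blocks:
`flatAux blk v n` is the pair (block index, offset inside the block) of position `n`. -/
def flatAux {A B : Type} (blk : A → List B) (v : ℕ → A) : ℕ → ℕ × ℕ
  | 0 => (0, 0)
  | n + 1 =>
      let p := flatAux blk v n
      if p.2 + 1 < (blk (v p.1)).length then (p.1, p.2 + 1) else (p.1 + 1, 0)

/-- Flattening of an infinite word of (nonempty) blocks. -/
def flatten {A B : Type} [Inhabited B] (blk : A → List B) (v : ℕ → A) : ℕ → B :=
  fun n => (blk (v (flatAux blk v n).1)).getD (flatAux blk v n).2 default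

/-- The block of a letter of `Σ^d ∪ {⋆}`: a `d`-tuple becomes its list of components,
`⋆` stays a single letter. -/
def parBlock {b d : ℕ} : Option (Fin d → Fin b) → List (Option (Fin b))
  | none => [none]
  | some t => List.ofFn fun i => some (t i)

/-- `seq(𝐯)`: the sequentialization of an infinite word over `Σ^d ∪ {⋆}`. -/
def seqWord {b d : ℕ} (v : ℕ → Option (Fin d → Fin b)) : ℕ → Option (Fin b) :=
  flatten parBlock v

/-- The block of a letter of `Σ^□_f ∪ {⋆}`, as a word over `Σ ∪ {□,⋆}`. -/
def sqBlock {b d : ℕ} (f : Fin d) :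
    Option ({i : Fin d // i ≠ f} → Fin b) → List (Option (Option (Fin b)))
  | none => [none]
  | some t => List.ofFn fun i : Fin d =>
      if h : i = f then some none else some (some (t ⟨i, h⟩))

/-- Number of non-`⋆` letters among the first `n` letters of `w`. -/
def digitCount {b : ℕ} (w : ℕ → Option (Fin b)) : ℕ → ℕ
  | 0 => 0
  | n + 1 => digitCount w n + (if w n = none then 0 else 1)


section AuxStmt15
variable {A Q : Type}

lemma cat_lt' {p : List A} {m : ℕ} (h : m < p.length) (w : ℕ → A) : cat p w m = p[m] := by
  simp [cat, h]

lemma cat_ge' (p : List A) (w : ℕ → A) (k : ℕ) : cat p w (p.length + k) = w k := by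
  simp [cat]

lemma cat_cons' (a : A) (p : List A) (w : ℕ → A) (k : ℕ) :
    cat (a :: p) w (k + 1) = cat p w k := by
  simp only [cat, List.length_cons]
  by_cases h : k < p.length
  · rw [dif_pos (Nat.succ_lt_succ h), dif_pos h]; simp
  · rw [dif_neg (by omega), dif_neg h]; congr 1; omega

lemma DBA.run_add (M : DBA A Q) (w : ℕ → A) (m n : ℕ) :
    M.run w (m + n) = (M.start (M.run w m)).run (fun k => w (m + k)) n := by
  induction n with
  | zero => rfl
  | succ n ih =>
      show M.run w ((m + n) + 1) = _
      rw [DBA.run, ih]; rfl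

lemma DBA.deltaStar_append (M : DBA A Q) (q : Q) (p p' : List A) :
    M.deltaStar q (p ++ p') = M.deltaStar (M.deltaStar q p) p' := by
  induction p generalizing q with
  | nil => rfl
  | cons a p ih => simp [DBA.deltaStar, ih]

lemma DBA.run_cat_len (M : DBA A Q) (q : Q) (p : List A) (w : ℕ → A) :
    (M.start q).run (cat p w) p.length = M.deltaStar q p := by
  induction p generalizing q w with
  | nil => rfl
  | cons a p ih =>
      have h1 : (a :: p).length = 1 + p.length := by simp [Nat.add_comm]
      rw [h1, DBA.run_add]
      have h2 : (M.start q).run (cat (a :: p) w) 1 = M.delta q a := by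
        show (M.start q).delta ((M.start q).run (cat (a::p) w) 0) (cat (a::p) w 0) = _
        have : cat (a :: p) w 0 = a := by simp [cat]
        rw [this]; rfl
      rw [h2]
      have h3 : (fun k => cat (a :: p) w (1 + k)) = cat p w := by
        funext k; rw [Nat.add_comm 1 k, cat_cons']
      show (M.start (M.delta q a)).run (fun k => cat (a :: p) w (1 + k)) p.length = _
      rw [h3, ih]
      rfl

lemma DBA.run_cat (M : DBA A Q) (p : List A) (w : ℕ → A) (n : ℕ) :
    M.run (cat p w) (p.length + n) = (M.start (M.deltaStar M.init p)).run w n := by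
  rw [DBA.run_add]
  have h1 : M.run (cat p w) p.length = M.deltaStar M.init p := DBA.run_cat_len M M.init p w
  rw [h1]
  congr 1
  funext k; exact cat_ge' p w k

lemma DBA.accepts_cat (M : DBA A Q) (p : List A) (w : ℕ → A) :
    M.Accepts (cat p w) ↔ (M.start (M.deltaStar M.init p)).Accepts w := by
  constructor
  · rintro ⟨qf, hqf, h⟩
    refine ⟨qf, hqf, fun N => ?_⟩
    obtain ⟨n, hn, hr⟩ := h (p.length + N)
    refine ⟨n - p.length, by omega, ?_⟩
    rw [← DBA.run_cat]
    have : p.length + (n - p.length) = n := by omega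
    rw [this]; exact hr
  · rintro ⟨qf, hqf, h⟩
    refine ⟨qf, hqf, fun N => ?_⟩
    obtain ⟨n, hn, hr⟩ := h N
    exact ⟨p.length + n, by omega, by rw [DBA.run_cat]; exact hr⟩

lemma cat_ext (p : List A) (w w0 : ℕ → A)
    (h1 : ∀ m (hm : m < p.length), w m = p[m])
    (h2 : ∀ k, w (p.length + k) = w0 k) : w = cat p w0 := by
  funext m
  by_cases h : m < p.length
  · rw [cat_lt' h]; exact h1 m h
  · rw [show m = p.length + (m - p.length) by omega, cat_ge']
    exact h2 _

variable {B : Type}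

lemma getElem_word1 (u : List B) (m : ℕ) (hm : m < u.length + 1) :
    (u.map some ++ [none])[m]'(by simpa using hm) =
      if h : m < u.length then some (u[m]) else none := by
  split
  case isTrue h =>
    rw [List.getElem_append_left (by simpa using h)]
    simp
  case isFalse h =>
    have he : m = u.length := by omega
    subst he
    rw [List.getElem_append_right (by simp)]
    simp

lemma none_pos (u : List B) (w0 : ℕ → B) (m : ℕ)
    (h : cat (u.map some ++ [none]) (fun n => some (w0 n)) m = none) :
    m = u.length := by
  by_cases hm : m < (u.map some ++ [none]).length
  · rw [cat_lt' hm] at h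
    have hm' : m < u.length + 1 := by simpa using hm
    rw [getElem_word1 u m hm'] at h
    by_cases h2 : m < u.length
    · rw [dif_pos h2] at h; simp at h
    · omega
  · have hge : m = (u.map some ++ [none]).length + (m - (u.map some ++ [none]).length) := by
      omega
    rw [hge] at h
    have : cat (u.map some ++ [none]) (fun n => some (w0 n))
        ((u.map some ++ [none]).length + (m - (u.map some ++ [none]).length))
        = some (w0 (m - (u.map some ++ [none]).length)) := by
      exact cat_ge' _ _ _
    rw [this] at h; simp at h

end AuxStmt15

/-- characterization of automata accepting only words of
`B^{d'ℕ}⋆B^ω`, via the sets `Q_∅`, `Q_i` and `Q_fra`. -/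
theorem stmt15 {B Q : Type} [Fintype B] [Fintype Q] (d' : ℕ) (hd' : 0 < d')
    (M : DBA (Option B) Q)
    (hstar : ∀ w ∈ M.Lang, ∃ n, w n = none) :
    (∀ w ∈ M.Lang, ∃ (u : List B) (k : ℕ) (w' : ℕ → B),
        u.length = d' * k ∧ w = cat (u.map some ++ [none]) (fun n => some (w' n))) ↔
      (∀ q : Q,
        ((∃ u v : List B, M.deltaStar M.init (u.map some ++ none :: v.map some) = q) ∨
         (∃ i : ℕ, 1 ≤ i ∧ i < d' ∧
           ∃ u : List B, u.length % d' = i ∧ M.deltaStar M.init (u.map some) = q)) →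
        (M.start (M.delta q none)).Lang = ∅) := by
  constructor
  · -- forward
    intro H q hq
    by_contra hne
    obtain ⟨w', hw'⟩ := Set.nonempty_iff_ne_empty.mpr hne
    rcases hq with ⟨u, v, huv⟩ | ⟨i, hi1, hi2, u, hu, hq⟩
    · -- Q_fra case
      have hδ : M.deltaStar M.init ((u.map some ++ none :: v.map some) ++ [none])
          = M.delta q none := by
        rw [DBA.deltaStar_append, huv]; rfl
      have hacc : M.Accepts (cat ((u.map some ++ none :: v.map some) ++ [none]) w') := by
        rw [DBA.accepts_cat, hδ]; exact hw'
      obtain ⟨u0, k, w0, hlen, heq⟩ := H _ hacc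
      have hl1 : u.length < ((u.map some ++ none :: v.map some) ++ [none]).length := by
        simp
      have hl2 : u.length + 1 + v.length
          < ((u.map some ++ none :: v.map some) ++ [none]).length := by
        simp; omega
      have h1 : cat ((u.map some ++ none :: v.map some) ++ [none]) w' u.length = none := by
        rw [cat_lt' hl1]
        rw [List.getElem_append_left (by simp)]
        rw [List.getElem_append_right (by simp)]
        simp
      have h2 : cat ((u.map some ++ none :: v.map some) ++ [none]) w'
          (u.length + 1 + v.length) = none := by
        rw [cat_lt' hl2]
        rw [List.getElem_append_right (by simp; omega)]
        simp
      rw [heq] at h1 h2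
      have e1 := none_pos _ _ _ h1
      have e2 := none_pos _ _ _ h2
      omega
    · -- Q_i case
      have hδ : M.deltaStar M.init (u.map some ++ [none]) = M.delta q none := by
        rw [DBA.deltaStar_append, hq]; rfl
      have hacc : M.Accepts (cat (u.map some ++ [none]) w') := by
        rw [DBA.accepts_cat, hδ]; exact hw'
      obtain ⟨u0, k, w0, hlen, heq⟩ := H _ hacc
      have hl1 : u.length < (u.map some ++ [none]).length := by simp
      have h1 : cat (u.map some ++ [none]) w' u.length = none := by
        rw [cat_lt' hl1]
        rw [List.getElem_append_right (by simp)]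
        simp
      rw [heq] at h1
      have e1 := none_pos _ _ _ h1
      have : u0.length % d' = 0 := by rw [hlen]; exact Nat.mul_mod_right _ _
      rw [e1] at hu
      omega
  · -- backward
    intro H w hw
    classical
    have hex : ∃ n, w n = none := hstar w hw
    set n0 := Nat.find hex with hn0def
    have hwn0 : w n0 = none := Nat.find_spec hex
    have hmin : ∀ m, m < n0 → w m ≠ none := fun m hm => Nat.find_min hex hm
    set u : List B := List.ofFn (fun i : Fin n0 => (w i).get
      (Option.ne_none_iff_isSome.mp (hmin i i.2))) with hudef
    have hu_len : u.length = n0 := by simp [hudef]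
    have hu_get : ∀ m (hm : m < n0), some (u[m]'(by omega)) = w m := by
      intro m hm
      simp [hudef]
    have hpre1 : ∀ m (hm : m < (u.map some ++ [none]).length),
        w m = (u.map some ++ [none])[m] := by
      intro m hm
      have hm' : m < u.length + 1 := by simpa using hm
      rw [getElem_word1 u m hm']
      split
      case isTrue h => exact (hu_get m (by omega)).symm
      case isFalse h =>
        have : m = n0 := by omega
        rw [this]; exact hwn0
    have hmod : n0 % d' = 0 := by
      by_contra hne0
      have hql := H (M.deltaStar M.init (u.map some))
        (Or.inr ⟨n0 % d', by omega, Nat.mod_lt _ hd', u, by rw [hu_len], rfl⟩)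
      have hweq : w = cat (u.map some ++ [none]) (fun k => w (n0 + 1 + k)) := by
        apply cat_ext _ _ _ hpre1
        intro k
        congr 1
        simp [hu_len]
      have hacc : M.Accepts (cat (u.map some ++ [none]) (fun k => w (n0 + 1 + k))) := by
        rw [← hweq]; exact hw
      rw [DBA.accepts_cat, DBA.deltaStar_append] at hacc
      exact Set.eq_empty_iff_forall_notMem.mp hql _ hacc
    have hafter : ∀ k, w (n0 + 1 + k) ≠ none := by
      intro k hk
      have hex2 : ∃ j, w (n0 + 1 + j) = none := ⟨k, hk⟩
      set k0 := Nat.find hex2 with hk0def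
      have hk0 : w (n0 + 1 + k0) = none := Nat.find_spec hex2
      have hmin2 : ∀ j, j < k0 → w (n0 + 1 + j) ≠ none := fun j hj => Nat.find_min hex2 hj
      set v : List B := List.ofFn (fun j : Fin k0 => (w (n0 + 1 + j)).get
        (Option.ne_none_iff_isSome.mp (hmin2 j j.2))) with hvdef
      have hv_len : v.length = k0 := by simp [hvdef]
      have hv_get : ∀ j (hj : j < k0), some (v[j]'(by omega)) = w (n0 + 1 + j) := by
        intro j hj
        simp [hvdef]
      have hql := H (M.deltaStar M.init (u.map some ++ none :: v.map some))
        (Or.inl ⟨u, v, rfl⟩)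
      have hP_len : ((u.map some ++ none :: v.map some) ++ [none]).length
          = n0 + 1 + k0 + 1 := by
        simp [hu_len, hv_len]
        omega
      have hpre2 : ∀ m (hm : m < ((u.map some ++ none :: v.map some) ++ [none]).length),
          w m = ((u.map some ++ none :: v.map some) ++ [none])[m] := by
        intro m hm
        have hm' : m < n0 + 1 + k0 + 1 := by rw [← hP_len]; exact hm
        rcases Nat.lt_or_ge m n0 with h | h
        · rw [List.getElem_append_left (by simp [hu_len, hv_len]; omega),
            List.getElem_append_left (by simp [hu_len]; omega), List.getElem_map]
          exact (hu_get m h).symm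
        · rcases Nat.eq_or_lt_of_le h with h2 | h2
          · rw [List.getElem_append_left (by simp [hu_len, hv_len]; omega),
              List.getElem_append_right (by simp [hu_len]; omega)]
            have hidx : m - (u.map some).length = 0 := by simp [hu_len]; omega
            simp only [hidx, List.getElem_cons_zero]
            rw [← h2]; exact hwn0
          · rcases Nat.lt_or_ge m (n0 + 1 + k0) with h3 | h3
            · rw [List.getElem_append_left (by simp [hu_len, hv_len]; omega),
                List.getElem_append_right (by simp [hu_len]; omega)]
              have hidx : m - (u.map some).length = (m - n0 - 1) + 1 := by
                simp [hu_len]; omega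
              simp only [hidx, List.getElem_cons_succ, List.getElem_map]
              have h5 := hv_get (m - n0 - 1) (by omega)
              rw [show n0 + 1 + (m - n0 - 1) = m from by omega] at h5
              exact h5.symm
            · have h4 : m = n0 + 1 + k0 := by omega
              rw [List.getElem_append_right (by simp [hu_len, hv_len]; omega)]
              simp only [List.getElem_singleton]
              rw [h4]; exact hk0
      have hweq : w = cat ((u.map some ++ none :: v.map some) ++ [none])
          (fun j => w (n0 + 1 + k0 + 1 + j)) := by
        apply cat_ext _ _ _ hpre2
        intro j
        rw [hP_len]
      have hacc : M.Accepts (cat ((u.map some ++ none :: v.map some) ++ [none])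
          (fun j => w (n0 + 1 + k0 + 1 + j))) := by
        rw [← hweq]; exact hw
      rw [DBA.accepts_cat, DBA.deltaStar_append] at hacc
      exact Set.eq_empty_iff_forall_notMem.mp hql _ hacc
    refine ⟨u, n0 / d',
      fun n => (w (n0 + 1 + n)).get (Option.ne_none_iff_isSome.mp (hafter n)), ?_, ?_⟩
    · rw [hu_len]
      exact (Nat.mul_div_cancel' (Nat.dvd_of_mod_eq_zero hmod)).symm
    · apply cat_ext _ _ _ hpre1
      intro k
      have hl : (u.map some ++ [none]).length + k = n0 + 1 + k := by simp [hu_len]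
      rw [hl]
      exact (Option.some_get (Option.ne_none_iff_isSome.mp (hafter k))).symm
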